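/- The quasisymmetric divided difference operators satisfy ∂̃_i² = 0 and ∂̃_i ∂̃_j = ∂̃_j ∂̃_i for |i−j| > 1. -/

import Mathlib

open MvPolynomial

/-- Hivert's quasisymmetric swap on exponent vectors: exchange the exponents in
positions `i` and `i+1` if one of them is zero, otherwise do nothing. -/
noncomputable def tswapE (n i : ℕ) (hi : i + 1 < n) (β : Fin n →₀ ℕ) : Fin n →₀ ℕ :=
  if β ⟨i, by omega⟩ = 0 ∨ β ⟨i + 1, hi⟩ = 0 then
    β.equivMapDomain (Equiv.swap (⟨i, by omega⟩ : Fin n) ⟨i + 1, hi⟩)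
  else β

/-- Hivert's quasisymmetric action `s̃ᵢ` on polynomials, acting monomial-wise by
`s̃ᵢ(x^β) = x^(s̃ᵢ β)` and extended linearly. -/
noncomputable def stilde (n i : ℕ) (hi : i + 1 < n) (f : MvPolynomial (Fin n) ℂ) :
    MvPolynomial (Fin n) ℂ :=
  f.support.sum fun β => monomial (tswapE n i hi β) (coeff β f)

/-- `DRel n i hi f g` encodes `∂̃ᵢ f = g`, where
`∂̃ᵢ f = (f - s̃ᵢ f)/(xᵢ - xᵢ₊₁)`; the relation `(xᵢ - xᵢ₊₁) * g = f - s̃ᵢ f`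
determines `g` uniquely. -/
def DRel (n i : ℕ) (hi : i + 1 < n) (f g : MvPolynomial (Fin n) ℂ) : Prop :=
  (X ⟨i, by omega⟩ - X ⟨i + 1, hi⟩) * g = f - stilde n i hi f

namespace QS
variable {n : ℕ}

noncomputable def tsw (p q : Fin n) (β : Fin n →₀ ℕ) : Fin n →₀ ℕ :=
  if β p = 0 ∨ β q = 0 then β.equivMapDomain (Equiv.swap p q) else β

lemma tswapE_eq (i : ℕ) (hi : i + 1 < n) :
    tswapE n i hi = tsw (⟨i, by omega⟩ : Fin n) ⟨i + 1, hi⟩ := rfl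

noncomputable def U (β : Fin n →₀ ℕ) (p q : Fin n) (a b : ℕ) : Fin n →₀ ℕ :=
  (β.update p a).update q b

lemma U_apply (β : Fin n →₀ ℕ) (p q : Fin n) (a b : ℕ) (r : Fin n) :
    U β p q a b r = if r = q then b else if r = p then a else β r := by
  simp [U, Finsupp.coe_update, Function.update_apply]

lemma U_self (β : Fin n →₀ ℕ) (p q : Fin n) (hpq : p ≠ q) : U β p q (β p) (β q) = β := by
  ext r; rw [U_apply]; split_ifs with h1 h2 <;> simp_all

lemma tsw_fix {p q : Fin n} {β : Fin n →₀ ℕ} (hp : β p ≠ 0) (hq : β q ≠ 0) :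
    tsw p q β = β := if_neg (by tauto)

lemma tsw_U_swap (β : Fin n →₀ ℕ) {p q : Fin n} (hpq : p ≠ q) {a b : ℕ} (h : a = 0 ∨ b = 0) :
    tsw p q (U β p q a b) = U β p q b a := by
  have hp : U β p q a b p = a := by rw [U_apply]; simp [hpq]
  have hq : U β p q a b q = b := by rw [U_apply]; simp
  rw [tsw, if_pos (by rw [hp, hq]; exact h)]
  ext r
  rw [Finsupp.equivMapDomain_apply, Equiv.symm_swap]
  rcases eq_or_ne r q with rfl | hrq
  · rw [Equiv.swap_apply_right, hp, U_apply, if_pos rfl]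
  · rcases eq_or_ne r p with rfl | hrp
    · rw [Equiv.swap_apply_left, hq, U_apply, if_neg hpq, if_pos rfl]
    · rw [Equiv.swap_apply_of_ne_of_ne hrp hrq, U_apply, U_apply, if_neg hrq, if_neg hrp,
        if_neg hrq, if_neg hrp]

noncomputable def strM (p q : Fin n) (m : ℕ) (β : Fin n →₀ ℕ) (c : ℂ) :
    MvPolynomial (Fin n) ℂ :=
  ∑ k ∈ Finset.range m, monomial (U β p q k (m - 1 - k)) c

noncomputable def Dmono (p q : Fin n) (β : Fin n →₀ ℕ) (c : ℂ) : MvPolynomial (Fin n) ℂ :=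
  if β q = 0 then strM p q (β p) β c
  else if β p = 0 then - strM p q (β q) β c
  else 0

lemma U_add_single_p (β : Fin n →₀ ℕ) {p q : Fin n} (hpq : p ≠ q) (a b : ℕ) :
    U β p q a b + Finsupp.single p 1 = U β p q (a + 1) b := by
  ext r
  simp only [Finsupp.add_apply, Finsupp.single_apply, U_apply]
  split_ifs <;> subst_vars <;> first | omega | exact absurd rfl hpq

lemma U_add_single_q (β : Fin n →₀ ℕ) {p q : Fin n} (hpq : p ≠ q) (a b : ℕ) :
    U β p q a b + Finsupp.single q 1 = U β p q a (b + 1) := by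
  ext r
  simp only [Finsupp.add_apply, Finsupp.single_apply, U_apply]
  split_ifs <;> subst_vars <;> first | omega | exact absurd rfl hpq

lemma X_mul_monomial' (p : Fin n) (δ : Fin n →₀ ℕ) (c : ℂ) :
    X p * monomial δ c = monomial (δ + Finsupp.single p 1) c := by
  rw [X, monomial_mul, one_mul, add_comm]

lemma strM_mul {p q : Fin n} (hpq : p ≠ q) (m : ℕ) (β : Fin n →₀ ℕ) (c : ℂ) :
    (X p - X q) * strM p q m β c
      = monomial (U β p q m 0) c - monomial (U β p q 0 m) c := by
  rw [strM, Finset.mul_sum]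
  have : ∀ k ∈ Finset.range m,
      (X p - X q) * monomial (U β p q k (m - 1 - k)) c
        = monomial (U β p q (k+1) (m - (k+1))) c - monomial (U β p q k (m - k)) c := by
    intro k hk
    rw [Finset.mem_range] at hk
    rw [sub_mul, X_mul_monomial', X_mul_monomial', U_add_single_p β hpq, U_add_single_q β hpq]
    have h1 : m - 1 - k + 1 = m - k := by omega
    have h2 : m - 1 - k = m - (k + 1) := by omega
    rw [h1, h2]
  rw [Finset.sum_congr rfl this,
    Finset.sum_range_sub (fun k => monomial (U β p q k (m - k)) c)]
  simp

lemma tsw_self_eq (β : Fin n →₀ ℕ) {p q : Fin n} (hpq : p ≠ q) (h : β p = 0 ∨ β q = 0) :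
    tsw p q β = U β p q (β q) (β p) := by
  conv_lhs => rw [← U_self β p q hpq]
  rw [tsw_U_swap β hpq h]

lemma Dmono_spec {p q : Fin n} (hpq : p ≠ q) (β : Fin n →₀ ℕ) (c : ℂ) :
    (X p - X q) * Dmono p q β c = monomial β c - monomial (tsw p q β) c := by
  rw [Dmono]
  by_cases hq : β q = 0
  · rw [if_pos hq, strM_mul hpq, tsw_self_eq β hpq (Or.inr hq), hq]
    congr 1
    rw [← hq, U_self β p q hpq]
  · rw [if_neg hq]
    by_cases hp : β p = 0
    · rw [if_pos hp, mul_neg, strM_mul hpq, neg_sub, tsw_self_eq β hpq (Or.inl hp), hp]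
      congr 1
      rw [← hp, U_self β p q hpq]
    · rw [if_neg hp, mul_zero, tsw_fix hp hq, sub_self]

noncomputable def T (p q : Fin n) (f : MvPolynomial (Fin n) ℂ) : MvPolynomial (Fin n) ℂ :=
  AddMonoidAlgebra.mapDomain (tsw p q) f

lemma T_eq_sum (p q : Fin n) (f : MvPolynomial (Fin n) ℂ) :
    T p q f = ∑ β ∈ f.support, monomial (tsw p q β) (coeff β f) := by
  have hs : ∀ s : Finset (Fin n →₀ ℕ), AddMonoidAlgebra.mapDomain (tsw p q)
      (∑ β ∈ s, monomial β (coeff β f)) = ∑ β ∈ s, monomial (tsw p q β) (coeff β f) := by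
    classical
    intro s
    induction s using Finset.induction_on with
    | empty => simp [AddMonoidAlgebra.mapDomain_zero]
    | insert a s ha ih =>
      rw [Finset.sum_insert ha, Finset.sum_insert ha, AddMonoidAlgebra.mapDomain_add, ih,
        ← single_eq_monomial, AddMonoidAlgebra.mapDomain_single, single_eq_monomial]
  rw [T]
  conv_lhs => rw [← support_sum_monomial_coeff f]
  exact hs _

lemma stilde_eq_T (i : ℕ) (hi : i + 1 < n) (f : MvPolynomial (Fin n) ℂ) :
    stilde n i hi f = T (⟨i, by omega⟩ : Fin n) ⟨i + 1, hi⟩ f := by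
  rw [T_eq_sum, stilde, tswapE_eq]

lemma T_add (p q : Fin n) (f g : MvPolynomial (Fin n) ℂ) :
    T p q (f + g) = T p q f + T p q g := AddMonoidAlgebra.mapDomain_add _ _ _

lemma T_zero (p q : Fin n) : T p q (0 : MvPolynomial (Fin n) ℂ) = 0 := AddMonoidAlgebra.mapDomain_zero _

lemma T_neg (p q : Fin n) (f : MvPolynomial (Fin n) ℂ) : T p q (-f) = - T p q f := by
  have h := T_add p q f (-f)
  rw [add_neg_cancel, T_zero] at h
  exact (neg_eq_of_add_eq_zero_right h.symm).symm

lemma T_monomial (p q : Fin n) (δ : Fin n →₀ ℕ) (c : ℂ) :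
    T p q (monomial δ c) = monomial (tsw p q δ) c := by
  rw [T, ← single_eq_monomial, AddMonoidAlgebra.mapDomain_single, single_eq_monomial]

lemma T_sum (p q : Fin n) {α : Type*} (s : Finset α) (F : α → MvPolynomial (Fin n) ℂ) :
    T p q (∑ x ∈ s, F x) = ∑ x ∈ s, T p q (F x) := by
  classical
  induction s using Finset.induction_on with
  | empty => simp [T_zero]
  | insert _ _ h ih => rw [Finset.sum_insert h, Finset.sum_insert h, T_add, ih]

lemma U_apply_p (β : Fin n →₀ ℕ) {p q : Fin n} (hpq : p ≠ q) (a b : ℕ) :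
    U β p q a b p = a := by rw [U_apply]; simp [hpq]

lemma U_apply_q (β : Fin n →₀ ℕ) (p q : Fin n) (a b : ℕ) :
    U β p q a b q = b := by rw [U_apply]; simp

lemma U_apply_other (β : Fin n →₀ ℕ) {p q r : Fin n} (hrp : r ≠ p) (hrq : r ≠ q) (a b : ℕ) :
    U β p q a b r = β r := by rw [U_apply, if_neg hrq, if_neg hrp]

lemma tsw_strM {p q : Fin n} (hpq : p ≠ q) (m : ℕ) (β : Fin n →₀ ℕ) (c : ℂ) :
    T p q (strM p q m β c) = strM p q m β c := by
  rw [strM, T_sum]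
  refine Finset.sum_equiv (Equiv.swap 0 (m - 1)) ?_ ?_
  · intro k
    rw [Equiv.swap_apply_def]
    simp only [Finset.mem_range]
    split_ifs <;> omega
  · intro k hk
    rw [Finset.mem_range] at hk
    rw [T_monomial]
    congr 2
    rcases eq_or_ne k 0 with rfl | hk0
    · rw [Equiv.swap_apply_left, Nat.sub_zero, Nat.sub_self]
      exact tsw_U_swap β hpq (Or.inl rfl)
    · rcases eq_or_ne k (m - 1) with rfl | hk1
      · rw [Equiv.swap_apply_right, Nat.sub_self, Nat.sub_zero]
        exact tsw_U_swap β hpq (Or.inr rfl)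
      · rw [Equiv.swap_apply_of_ne_of_ne hk0 hk1]
        refine tsw_fix ?_ ?_
        · rw [U_apply_p β hpq]; omega
        · rw [U_apply_q]; omega

lemma T_Dmono {p q : Fin n} (hpq : p ≠ q) (β : Fin n →₀ ℕ) (c : ℂ) :
    T p q (Dmono p q β c) = Dmono p q β c := by
  rw [Dmono]
  split_ifs
  · exact tsw_strM hpq _ β c
  · rw [T_neg, tsw_strM hpq _ β c]
  · exact T_zero p q

def Rel' (p q : Fin n) (f g : MvPolynomial (Fin n) ℂ) : Prop :=
  (X p - X q) * g = f - T p q f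

lemma X_sub_ne {p q : Fin n} (hpq : p ≠ q) : (X p - X q : MvPolynomial (Fin n) ℂ) ≠ 0 :=
  sub_ne_zero.mpr fun e => hpq (X_injective e)

lemma Rel'_unique {p q : Fin n} (hpq : p ≠ q) {f g g' : MvPolynomial (Fin n) ℂ}
    (h1 : Rel' p q f g) (h2 : Rel' p q f g') : g = g' :=
  mul_left_cancel₀ (X_sub_ne hpq) (h1.trans h2.symm)

lemma DRel_iff (i : ℕ) (hi : i + 1 < n) (f g : MvPolynomial (Fin n) ℂ) :
    DRel n i hi f g ↔ Rel' (⟨i, by omega⟩ : Fin n) ⟨i + 1, hi⟩ f g := by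
  rw [DRel, Rel', stilde_eq_T]

noncomputable def DF (p q : Fin n) (f : MvPolynomial (Fin n) ℂ) : MvPolynomial (Fin n) ℂ :=
  ∑ β ∈ f.support, Dmono p q β (coeff β f)

lemma Rel'_DF {p q : Fin n} (hpq : p ≠ q) (f : MvPolynomial (Fin n) ℂ) :
    Rel' p q f (DF p q f) := by
  rw [Rel', DF, Finset.mul_sum,
    Finset.sum_congr rfl (fun β _ => Dmono_spec hpq β (coeff β f)),
    Finset.sum_sub_distrib, support_sum_monomial_coeff, T_eq_sum]

lemma T_DF {p q : Fin n} (hpq : p ≠ q) (f : MvPolynomial (Fin n) ℂ) :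
    T p q (DF p q f) = DF p q f := by
  rw [DF, T_sum, Finset.sum_congr rfl (fun β _ => T_Dmono hpq β (coeff β f))]

lemma Dmono_zero (p q : Fin n) (β : Fin n →₀ ℕ) : Dmono p q β 0 = 0 := by
  rw [Dmono, strM, strM]
  split_ifs <;> simp

lemma DF_monomial {p q : Fin n} (hpq : p ≠ q) (δ : Fin n →₀ ℕ) (c : ℂ) :
    DF p q (monomial δ c) = Dmono p q δ c := by
  by_cases hc : c = 0
  · subst hc
    rw [Dmono_zero]
    simp [DF]
  · rw [DF]
    rw [support_monomial, if_neg hc, Finset.sum_singleton, coeff_monomial, if_pos rfl]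

lemma Rel'_add {p q : Fin n} {f f' g g' : MvPolynomial (Fin n) ℂ}
    (h1 : Rel' p q f g) (h2 : Rel' p q f' g') : Rel' p q (f + f') (g + g') := by
  rw [Rel', T_add, mul_add, h1, h2]
  ring

lemma DF_add {p q : Fin n} (hpq : p ≠ q) (f f' : MvPolynomial (Fin n) ℂ) :
    DF p q (f + f') = DF p q f + DF p q f' :=
  Rel'_unique hpq (Rel'_DF hpq (f + f')) (Rel'_add (Rel'_DF hpq f) (Rel'_DF hpq f'))

lemma DF_zero {p q : Fin n} (hpq : p ≠ q) : DF p q (0 : MvPolynomial (Fin n) ℂ) = 0 := by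
  simp [DF]

lemma DF_neg {p q : Fin n} (hpq : p ≠ q) (f : MvPolynomial (Fin n) ℂ) :
    DF p q (-f) = - DF p q f := by
  have h := DF_add hpq f (-f)
  rw [add_neg_cancel, DF_zero hpq] at h
  exact (neg_eq_of_add_eq_zero_right h.symm).symm

lemma DF_sum {p q : Fin n} (hpq : p ≠ q) {α : Type*} (s : Finset α)
    (F : α → MvPolynomial (Fin n) ℂ) :
    DF p q (∑ x ∈ s, F x) = ∑ x ∈ s, DF p q (F x) := by
  classical
  induction s using Finset.induction_on with
  | empty => simp [DF_zero hpq]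
  | insert _ _ h ih => rw [Finset.sum_insert h, Finset.sum_insert h, DF_add hpq, ih]

theorem part1 (i : ℕ) (hi : i + 1 < n) (f g h : MvPolynomial (Fin n) ℂ)
    (h1 : DRel n i hi f g) (h2 : DRel n i hi g h) : h = 0 := by
  set p : Fin n := ⟨i, by omega⟩ with hp
  set q : Fin n := ⟨i + 1, hi⟩ with hq
  have hpq : p ≠ q := by
    rw [hp, hq]
    intro e
    have := congrArg Fin.val e
    simp at this
  rw [DRel_iff] at h1 h2
  have hg : g = DF p q f := Rel'_unique hpq h1 (Rel'_DF hpq f)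
  have hT : T p q g = g := by rw [hg]; exact T_DF hpq f
  rw [Rel'] at h2
  rw [hT, sub_self] at h2
  rcases mul_eq_zero.mp h2 with hc | hc
  · exact absurd hc (X_sub_ne hpq)
  · exact hc

lemma DF_strM {r r' s s' : Fin n} (hrr' : r ≠ r')
    (h1 : r ≠ s) (h2 : r ≠ s') (h3 : r' ≠ s) (h4 : r' ≠ s')
    (m : ℕ) (β : Fin n →₀ ℕ) (c : ℂ) :
    DF r r' (strM s s' m β c) =
      if β r' = 0 then
        ∑ k ∈ Finset.range m, strM r r' (β r) (U β s s' k (m - 1 - k)) c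
      else if β r = 0 then
        -∑ k ∈ Finset.range m, strM r r' (β r') (U β s s' k (m - 1 - k)) c
      else 0 := by
  rw [strM, DF_sum hrr', Finset.sum_congr rfl (fun k _ => DF_monomial hrr' _ c)]
  have e1 : ∀ x y, U β s s' x y r' = β r' := fun x y => U_apply_other β h3 h4 _ _
  have e2 : ∀ x y, U β s s' x y r = β r := fun x y => U_apply_other β h1 h2 _ _
  by_cases hr' : β r' = 0
  · rw [if_pos hr']
    exact Finset.sum_congr rfl fun k _ => by rw [Dmono, e1, e2, if_pos hr']
  · rw [if_neg hr']
    by_cases hr : β r = 0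
    · rw [if_pos hr, ← Finset.sum_neg_distrib]
      exact Finset.sum_congr rfl fun k _ => by rw [Dmono, e1, e2, if_neg hr', if_pos hr]
    · rw [if_neg hr]
      exact Finset.sum_eq_zero fun k _ => by rw [Dmono, e1, e2, if_neg hr', if_neg hr]

lemma UU_comm {p p' q q' : Fin n} (hpq : p ≠ q) (hpq' : p ≠ q') (hp'q : p' ≠ q)
    (hp'q' : p' ≠ q') (β : Fin n →₀ ℕ) (a b a' b' : ℕ) :
    U (U β p p' a b) q q' a' b' = U (U β q q' a' b') p p' a b := by
  ext r
  simp only [U_apply]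
  split_ifs <;> first | rfl | (subst_vars; tauto)

lemma key_comm {p p' q q' : Fin n} (hpq : p ≠ q) (hpq' : p ≠ q') (hp'q : p' ≠ q)
    (hp'q' : p' ≠ q') (β : Fin n →₀ ℕ) (c : ℂ) (m₁ m₂ : ℕ) :
    ∑ k ∈ Finset.range m₁, strM q q' m₂ (U β p p' k (m₁ - 1 - k)) c
      = ∑ l ∈ Finset.range m₂, strM p p' m₁ (U β q q' l (m₂ - 1 - l)) c := by
  simp only [strM]
  rw [Finset.sum_comm]
  exact Finset.sum_congr rfl fun l _ => Finset.sum_congr rfl fun k _ => by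
    rw [UU_comm hpq hpq' hp'q hp'q']

lemma DD_mono_comm {p p' q q' : Fin n} (hpp' : p ≠ p') (hqq' : q ≠ q') (hpq : p ≠ q)
    (hpq' : p ≠ q') (hp'q : p' ≠ q) (hp'q' : p' ≠ q') (β : Fin n →₀ ℕ) (c : ℂ) :
    DF q q' (Dmono p p' β c) = DF p p' (Dmono q q' β c) := by
  have L := fun m => DF_strM hqq' hpq.symm hp'q.symm hpq'.symm hp'q'.symm m β c
  have R := fun m => DF_strM hpp' hpq hpq' hp'q hp'q' m β c
  rw [Dmono, Dmono]
  by_cases h1 : β p' = 0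
  · rw [if_pos h1]
    by_cases h2 : β q' = 0
    · rw [if_pos h2, L (β p), R (β q), if_pos h2, if_pos h1]
      exact key_comm hpq hpq' hp'q hp'q' β c (β p) (β q)
    · rw [if_neg h2]
      by_cases h4 : β q = 0
      · rw [if_pos h4, L (β p), if_neg h2, if_pos h4, DF_neg hpp', R (β q'), if_pos h1]
        exact congrArg Neg.neg (key_comm hpq hpq' hp'q hp'q' β c (β p) (β q'))
      · rw [if_neg h4, L (β p), if_neg h2, if_neg h4, DF_zero hpp']
  · rw [if_neg h1]
    by_cases h3 : β p = 0
    · rw [if_pos h3]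
      by_cases h2 : β q' = 0
      · rw [if_pos h2, DF_neg hqq', L (β p'), if_pos h2, R (β q), if_neg h1, if_pos h3]
        exact congrArg Neg.neg (key_comm hpq hpq' hp'q hp'q' β c (β p') (β q))
      · rw [if_neg h2]
        by_cases h4 : β q = 0
        · rw [if_pos h4, DF_neg hqq', L (β p'), if_neg h2, if_pos h4, neg_neg,
            DF_neg hpp', R (β q'), if_neg h1, if_pos h3, neg_neg]
          exact key_comm hpq hpq' hp'q hp'q' β c (β p') (β q')
        · rw [if_neg h4, DF_neg hqq', L (β p'), if_neg h2, if_neg h4, neg_zero, DF_zero hpp']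
    · rw [if_neg h3, DF_zero hqq']
      by_cases h2 : β q' = 0
      · rw [if_pos h2, R (β q), if_neg h1, if_neg h3]
      · rw [if_neg h2]
        by_cases h4 : β q = 0
        · rw [if_pos h4, DF_neg hpp', R (β q'), if_neg h1, if_neg h3, neg_zero]
        · rw [if_neg h4, DF_zero hpp']

lemma DF_comm {p p' q q' : Fin n} (hpp' : p ≠ p') (hqq' : q ≠ q') (hpq : p ≠ q)
    (hpq' : p ≠ q') (hp'q : p' ≠ q) (hp'q' : p' ≠ q') (f : MvPolynomial (Fin n) ℂ) :
    DF q q' (DF p p' f) = DF p p' (DF q q' f) := by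
  have l1 : DF q q' (DF p p' f) = ∑ β ∈ f.support, DF q q' (Dmono p p' β (coeff β f)) := by
    rw [show DF p p' f = ∑ β ∈ f.support, Dmono p p' β (coeff β f) from rfl, DF_sum hqq']
  have l2 : DF p p' (DF q q' f) = ∑ β ∈ f.support, DF p p' (Dmono q q' β (coeff β f)) := by
    rw [show DF q q' f = ∑ β ∈ f.support, Dmono q q' β (coeff β f) from rfl, DF_sum hpp']
  rw [l1, l2]
  exact Finset.sum_congr rfl fun β _ =>
    DD_mono_comm hpp' hqq' hpq hpq' hp'q hp'q' β (coeff β f)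

theorem part2 (i j : ℕ) (hi : i + 1 < n) (hj : j + 1 < n) (hij : i + 1 < j ∨ j + 1 < i)
    (f a b a' b' : MvPolynomial (Fin n) ℂ)
    (H1 : DRel n i hi f a) (H2 : DRel n j hj a b)
    (H3 : DRel n j hj f a') (H4 : DRel n i hi a' b') : b = b' := by
  have hin : i < n := by omega
  have hjn : j < n := by omega
  set p : Fin n := ⟨i, hin⟩
  set p' : Fin n := ⟨i + 1, hi⟩
  set q : Fin n := ⟨j, hjn⟩
  set q' : Fin n := ⟨j + 1, hj⟩
  have hpp' : p ≠ p' := Fin.ne_of_val_ne (show i ≠ i + 1 by omega)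
  have hqq' : q ≠ q' := Fin.ne_of_val_ne (show j ≠ j + 1 by omega)
  have hpq : p ≠ q := Fin.ne_of_val_ne (show i ≠ j by omega)
  have hpq' : p ≠ q' := Fin.ne_of_val_ne (show i ≠ j + 1 by omega)
  have hp'q : p' ≠ q := Fin.ne_of_val_ne (show i + 1 ≠ j by omega)
  have hp'q' : p' ≠ q' := Fin.ne_of_val_ne (show i + 1 ≠ j + 1 by omega)
  rw [DRel_iff] at H1 H2 H3 H4
  have ha : a = DF p p' f := Rel'_unique hpp' H1 (Rel'_DF hpp' f)
  have hb : b = DF q q' a := Rel'_unique hqq' H2 (Rel'_DF hqq' a)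
  have ha' : a' = DF q q' f := Rel'_unique hqq' H3 (Rel'_DF hqq' f)
  have hb' : b' = DF p p' a' := Rel'_unique hpp' H4 (Rel'_DF hpp' a')
  rw [hb, ha, hb', ha']
  exact DF_comm hpp' hqq' hpq hpq' hp'q hp'q' f

end QS

/-- The quasisymmetric divided difference operators satisfy
`∂̃ᵢ² = 0` and `∂̃ᵢ ∂̃ⱼ = ∂̃ⱼ ∂̃ᵢ` for `|i−j| > 1`. -/
theorem dtilde_squared_zero_and_commute (n : ℕ) :
    (∀ (i : ℕ) (hi : i + 1 < n) (f g h : MvPolynomial (Fin n) ℂ),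
      DRel n i hi f g → DRel n i hi g h → h = 0) ∧
    (∀ (i j : ℕ) (hi : i + 1 < n) (hj : j + 1 < n), (i + 1 < j ∨ j + 1 < i) →
      ∀ f a b a' b' : MvPolynomial (Fin n) ℂ,
      DRel n i hi f a → DRel n j hj a b →
      DRel n j hj f a' → DRel n i hi a' b' →
      b = b') :=
  ⟨QS.part1, fun i j hi hj hij f a b a' b' H1 H2 H3 H4 =>
    QS.part2 i j hi hj hij f a b a' b' H1 H2 H3 H4⟩
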